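/- Let m ≥ 1 and let F(x) = ((2m+1)x − x^{2m+1})/(2m), a polynomial of odd degree 2m+1. Then F(1) = 1, F(−1) = −1, F'(1) = F'(−1) = 0, and for all y ∈ (−1,1) one has F'(y) > 0 and |F(y)| < 1. Moreover there exists a global solution (x,u,θ): ℝ → ℝ³ of x' = cos θ, u' = sin θ, θ' = F'(x) with sin θ(s) = F(x(s)), cos θ(s) > 0 and −1 < x(s) < 1 for all s, x(s) → −1 as s → −∞, and x(s) → 1 as s → +∞; hence the plane curve (x(s),u(s)) is a graph over the interval (−1,1), giving an infinite geodesic graph at the odd jet level k = 2m+1 ≥ 3. -/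

import Mathlib

open Filter Set

/-- The odd-degree polynomial function `F(y) = ((2m+1)y − y^{2m+1})/(2m)` generating an
infinite geodesic graph at the odd jet level `k = 2m+1`. -/
noncomputable def oddGraphF (m : ℕ) : ℝ → ℝ :=
  fun y => ((2 * (m : ℝ) + 1) * y - y ^ (2 * m + 1)) / (2 * (m : ℝ))

namespace Stmt17
variable {m : ℕ}

/-- explicit derivative -/
noncomputable def Fd (m : ℕ) : ℝ → ℝ :=
  fun y => ((2 * (m : ℝ) + 1) * (1 - y ^ (2 * m))) / (2 * (m : ℝ))

lemma hasDerivAt_F (m : ℕ) (y : ℝ) : HasDerivAt (oddGraphF m) (Fd m y) y := by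
  have h1 : HasDerivAt (fun y : ℝ => (2 * (m : ℝ) + 1) * y - y ^ (2 * m + 1))
      ((2 * (m : ℝ) + 1) - (2 * (m : ℝ) + 1) * y ^ (2 * m)) y := by
    have := ((hasDerivAt_id y).const_mul (2 * (m : ℝ) + 1)).sub (hasDerivAt_pow (2 * m + 1) y)
    refine this.congr_deriv ?_
    push_cast
    ring_nf
  have := h1.div_const (2 * (m : ℝ))
  refine this.congr_deriv ?_
  unfold Fd; ring

lemma deriv_F (m : ℕ) (y : ℝ) : deriv (oddGraphF m) y = Fd m y :=
  (hasDerivAt_F m y).deriv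

lemma hm2 (hm : 1 ≤ m) : (0:ℝ) < 2 * (m:ℝ) := by positivity

lemma F_one (hm : 1 ≤ m) : oddGraphF m 1 = 1 := by
  have : (2 * (m:ℝ)) ≠ 0 := (hm2 hm).ne'
  simp only [oddGraphF]
  field_simp [oddGraphF]
  ring

lemma F_neg (m : ℕ) (y : ℝ) : oddGraphF m (-y) = - oddGraphF m y := by
  unfold oddGraphF
  rw [Odd.neg_pow ⟨m, by ring⟩]
  ring

lemma F_negone (hm : 1 ≤ m) : oddGraphF m (-1) = -1 := by
  rw [F_neg, F_one hm]

lemma Fd_one (m : ℕ) : Fd m 1 = 0 := by simp [Fd]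

lemma Fd_negone (m : ℕ) : Fd m (-1) = 0 := by
  simp [Fd, pow_mul, neg_one_sq]

lemma Fd_pos (hm : 1 ≤ m) {y : ℝ} (hy : y ∈ Ioo (-1:ℝ) 1) : 0 < Fd m y := by
  have hy1 : |y| < 1 := abs_lt.2 ⟨hy.1, hy.2⟩
  have : y ^ (2 * m) < 1 := by
    calc y ^ (2*m) ≤ |y ^ (2*m)| := le_abs_self _
    _ = |y| ^ (2*m) := by rw [abs_pow]
    _ < 1 := pow_lt_one₀ (abs_nonneg y) hy1 (by omega)
  have h2 : (0:ℝ) < 2 * (m:ℝ) := hm2 hm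
  have h3 : (0:ℝ) < 1 - y ^ (2*m) := by linarith
  unfold Fd
  apply div_pos (by positivity) h2

lemma F_cont (m : ℕ) : Continuous (oddGraphF m) := by
  unfold oddGraphF; fun_prop

lemma F_strictMonoOn (hm : 1 ≤ m) : StrictMonoOn (oddGraphF m) (Icc (-1:ℝ) 1) := by
  apply strictMonoOn_of_deriv_pos (convex_Icc _ _) (F_cont m).continuousOn
  intro y hy
  rw [interior_Icc] at hy
  rw [deriv_F]
  exact Fd_pos hm hy

lemma F_abs_lt (hm : 1 ≤ m) {y : ℝ} (hy : y ∈ Ioo (-1:ℝ) 1) : |oddGraphF m y| < 1 := by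
  have h1 := F_strictMonoOn hm (left_mem_Icc.2 (by norm_num)) (mem_Icc_of_Ioo hy) hy.1
  have h2 := F_strictMonoOn hm (mem_Icc_of_Ioo hy) (right_mem_Icc.2 (by norm_num)) hy.2
  rw [F_one hm] at h2
  rw [F_negone hm] at h1
  exact abs_lt.2 ⟨h1, h2⟩

/-- `g y = √(1 - F(y)^2)`, the cosine of the tangent angle. -/
noncomputable def g (m : ℕ) : ℝ → ℝ := fun y => Real.sqrt (1 - (oddGraphF m y) ^ 2)

lemma g_pos (hm : 1 ≤ m) {y : ℝ} (hy : y ∈ Ioo (-1:ℝ) 1) : 0 < g m y := by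
  have := F_abs_lt hm hy
  have h : (0:ℝ) < 1 - (oddGraphF m y) ^ 2 := by
    have := abs_lt.1 this
    nlinarith [this.1, this.2]
  exact Real.sqrt_pos.2 h

lemma g_cont (m : ℕ) : Continuous (g m) := by
  unfold g
  exact (continuous_const.sub ((F_cont m).pow 2)).sqrt

lemma g_neg (m : ℕ) (y : ℝ) : g m (-y) = g m y := by
  unfold g; rw [F_neg]; ring_nf

lemma inv_g_contOn (hm : 1 ≤ m) : ContinuousOn (fun t => (g m t)⁻¹) (Ioo (-1:ℝ) 1) := by
  apply ContinuousOn.inv₀ (g_cont m).continuousOn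
  intro t ht; exact (g_pos hm ht).ne'

/-- The arclength function `S`. -/
noncomputable def S (m : ℕ) : ℝ → ℝ := fun z => ∫ t in (0:ℝ)..z, (g m t)⁻¹

lemma inv_g_integrable (hm : 1 ≤ m) {a b : ℝ} (ha : a ∈ Ioo (-1:ℝ) 1) (hb : b ∈ Ioo (-1:ℝ) 1) :
    IntervalIntegrable (fun t => (g m t)⁻¹) MeasureTheory.volume a b := by
  apply ContinuousOn.intervalIntegrable
  apply (inv_g_contOn hm).mono
  intro t ht
  rcases Set.mem_uIcc.1 ht with h | h
  · exact ⟨lt_of_lt_of_le ha.1 h.1, lt_of_le_of_lt h.2 hb.2⟩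
  · exact ⟨lt_of_lt_of_le hb.1 h.1, lt_of_le_of_lt h.2 ha.2⟩

lemma zero_mem : (0:ℝ) ∈ Ioo (-1:ℝ) 1 := by norm_num

lemma hasDerivAt_S (hm : 1 ≤ m) {z : ℝ} (hz : z ∈ Ioo (-1:ℝ) 1) :
    HasDerivAt (S m) ((g m z)⁻¹) z := by
  apply intervalIntegral.integral_hasDerivAt_right (inv_g_integrable hm zero_mem hz)
  · exact ((g_cont m).measurable.inv.stronglyMeasurable).stronglyMeasurableAtFilter
  · exact (inv_g_contOn hm).continuousAt (isOpen_Ioo.mem_nhds hz)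

lemma S_strictMonoOn (hm : 1 ≤ m) : StrictMonoOn (S m) (Ioo (-1:ℝ) 1) := by
  apply strictMonoOn_of_deriv_pos (convex_Ioo _ _)
  · intro z hz; exact ((hasDerivAt_S hm hz).continuousAt).continuousWithinAt
  · intro z hz
    rw [interior_Ioo] at hz
    rw [(hasDerivAt_S hm hz).deriv]
    exact inv_pos.2 (g_pos hm hz)

lemma S_neg (hm : 1 ≤ m) {b : ℝ} (hb : b ∈ Ioo (-1:ℝ) 1) : S m (-b) = - S m b := by
  have : S m (-b) = ∫ t in (0:ℝ)..(-b), (g m (-t))⁻¹ := by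
    unfold S
    congr 1
    ext t
    rw [g_neg]
  rw [this]
  have := intervalIntegral.integral_comp_neg (a := (0:ℝ)) (b := -b) (fun t => (g m t)⁻¹)
  rw [this]
  simp only [neg_neg, neg_zero]
  rw [intervalIntegral.integral_symm]
  rfl

lemma Fd_cont (m : ℕ) : Continuous (Fd m) := by
  unfold Fd; fun_prop

lemma Fd_le (hm : 1 ≤ m) {t : ℝ} (ht : t ∈ Icc (0:ℝ) 1) :
    Fd m t ≤ (2 * (m:ℝ) + 1) * (1 - t) := by
  have hb : (1:ℝ) + (2*m) * (t - 1) ≤ (1 + (t-1)) ^ (2*m) := by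
    have := one_add_mul_le_pow (a := t - 1) (by nlinarith [ht.1, ht.2]) (2*m)
    exact_mod_cast this
  have h1 : 1 - t ^ (2*m) ≤ 2*(m:ℝ) * (1 - t) := by
    have : (1:ℝ) + (t-1) = t := by ring
    rw [this] at hb
    nlinarith
  have h2 : (0:ℝ) < 2 * (m:ℝ) := hm2 hm
  rw [Fd, div_le_iff₀ h2]
  nlinarith [h1]

lemma one_sub_F_le (hm : 1 ≤ m) {b : ℝ} (hb : b ∈ Icc (0:ℝ) 1) :
    1 - oddGraphF m b ≤ (2 * (m:ℝ) + 1) * (1 - b) ^ 2 / 2 := by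
  have hftc : (1:ℝ) - oddGraphF m b = ∫ t in b..1, Fd m t := by
    rw [intervalIntegral.integral_eq_sub_of_hasDerivAt
      (fun t _ => hasDerivAt_F m t) ((Fd_cont m).intervalIntegrable _ _), F_one hm]
  have hrhs : ((2 * (m:ℝ) + 1) * (1 - b) ^ 2 / 2) = ∫ t in b..1, (2 * (m:ℝ) + 1) * (1 - t) := by
    have hG : ∀ t ∈ Set.uIcc b (1:ℝ), HasDerivAt (fun t => -((2 * (m:ℝ) + 1) * (1 - t) ^ 2 / 2))
        ((2 * (m:ℝ) + 1) * (1 - t)) t := by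
      intro t _
      have h1 : HasDerivAt (fun t : ℝ => (1 - t)) (-1) t := by
        simpa using (hasDerivAt_id t).const_sub 1
      have h2 := (h1.pow 2).const_mul (2 * (m:ℝ) + 1)
      have h3 := (h2.div_const 2).neg
      refine h3.congr_deriv ?_
      push_cast; ring
    rw [intervalIntegral.integral_eq_sub_of_hasDerivAt hG
      (by apply Continuous.intervalIntegrable; fun_prop)]
    ring
  rw [hftc, hrhs]
  apply intervalIntegral.integral_mono_on hb.2 ((Fd_cont m).intervalIntegrable _ _)
    (by apply Continuous.intervalIntegrable; fun_prop)
  intro t ht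
  exact Fd_le hm ⟨le_trans hb.1 ht.1, ht.2⟩

lemma g_le (hm : 1 ≤ m) {t : ℝ} (ht : t ∈ Ico (0:ℝ) 1) :
    g m t ≤ Real.sqrt (2 * (m:ℝ) + 1) * (1 - t) := by
  have htI : t ∈ Ioo (-1:ℝ) 1 := ⟨by linarith [ht.1], ht.2⟩
  have habs := abs_lt.1 (F_abs_lt hm htI)
  have h1 : 1 - (oddGraphF m t) ^ 2 ≤ (2 * (m:ℝ) + 1) * (1 - t) ^ 2 := by
    have h2 := one_sub_F_le hm ⟨ht.1, le_of_lt ht.2⟩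
    nlinarith [habs.1, habs.2]
  calc g m t ≤ Real.sqrt ((2 * (m:ℝ) + 1) * (1 - t) ^ 2) := Real.sqrt_le_sqrt h1
  _ = Real.sqrt (2 * (m:ℝ) + 1) * (1 - t) := by
      rw [Real.sqrt_mul (by positivity), Real.sqrt_sq (by linarith [ht.2])]

lemma log_integral {b : ℝ} (hb : b ∈ Ico (0:ℝ) 1) :
    (∫ t in (0:ℝ)..b, (1 - t)⁻¹) = - Real.log (1 - b) := by
  have hG : ∀ t ∈ Set.uIcc (0:ℝ) b, HasDerivAt (fun t => -Real.log (1 - t)) ((1 - t)⁻¹) t := by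
    intro t ht
    rw [Set.uIcc_of_le hb.1] at ht
    have h1t : (0:ℝ) < 1 - t := by linarith [ht.2, hb.2]
    have h1 : HasDerivAt (fun t : ℝ => (1 - t)) (-1) t := by
      simpa using (hasDerivAt_id t).const_sub 1
    have h2 := (Real.hasDerivAt_log h1t.ne').comp t h1
    have h3 := h2.neg
    refine h3.congr_deriv ?_
    field_simp
  rw [intervalIntegral.integral_eq_sub_of_hasDerivAt hG]
  · simp
  · apply ContinuousOn.intervalIntegrable
    apply ContinuousOn.inv₀ (by fun_prop)
    intro t ht
    rw [Set.uIcc_of_le hb.1] at ht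
    have : (0:ℝ) < 1 - t := by linarith [ht.2, hb.2]
    exact this.ne'

lemma S_lower (hm : 1 ≤ m) {b : ℝ} (hb : b ∈ Ico (0:ℝ) 1) :
    (Real.sqrt (2 * (m:ℝ) + 1))⁻¹ * (- Real.log (1 - b)) ≤ S m b := by
  have hbI : b ∈ Ioo (-1:ℝ) 1 := ⟨by linarith [hb.1], hb.2⟩
  have hsq : (0:ℝ) < Real.sqrt (2 * (m:ℝ) + 1) := Real.sqrt_pos.2 (by positivity)
  have key : ∫ t in (0:ℝ)..b, (Real.sqrt (2 * (m:ℝ) + 1))⁻¹ * (1 - t)⁻¹ ≤ S m b := by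
    apply intervalIntegral.integral_mono_on hb.1
    · apply ContinuousOn.intervalIntegrable
      apply ContinuousOn.mul continuousOn_const
      apply ContinuousOn.inv₀ (by fun_prop)
      intro t ht
      rw [Set.uIcc_of_le hb.1] at ht
      have : (0:ℝ) < 1 - t := by linarith [ht.2, hb.2]
      exact this.ne'
    · exact inv_g_integrable hm zero_mem hbI
    · intro t ht
      have htI : t ∈ Ico (0:ℝ) 1 := ⟨ht.1, lt_of_le_of_lt ht.2 hb.2⟩
      have h1t : (0:ℝ) < 1 - t := by linarith [htI.2]
      have hg := g_pos hm ⟨by linarith [htI.1], htI.2⟩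
      rw [← mul_inv]
      apply inv_anti₀ hg
      exact g_le hm htI
  calc (Real.sqrt (2 * (m:ℝ) + 1))⁻¹ * (- Real.log (1 - b))
      = ∫ t in (0:ℝ)..b, (Real.sqrt (2 * (m:ℝ) + 1))⁻¹ * (1 - t)⁻¹ := by
        rw [intervalIntegral.integral_const_mul, log_integral hb]
  _ ≤ S m b := key

lemma S_big (hm : 1 ≤ m) (y : ℝ) : ∃ b, b ∈ Ico (0:ℝ) 1 ∧ y < S m b := by
  set c := Real.sqrt (2 * (m:ℝ) + 1) with hc
  have hcpos : 0 < c := Real.sqrt_pos.2 (by positivity)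
  set b := 1 - Real.exp (-(c * (|y| + 1))) with hbdef
  have he1 : Real.exp (-(c * (|y| + 1))) ≤ 1 := by
    rw [Real.exp_le_one_iff]
    exact neg_nonpos.2 (by positivity)
  have he0 : 0 < Real.exp (-(c * (|y| + 1))) := Real.exp_pos _
  have hbmem : b ∈ Ico (0:ℝ) 1 := ⟨by simp only [hbdef]; linarith, by simp only [hbdef]; linarith⟩
  refine ⟨b, hbmem, ?_⟩
  have hlow := S_lower hm hbmem
  have hb : (1 : ℝ) - b = Real.exp (-(c * (|y| + 1))) := by rw [hbdef]; ring
  rw [hb, Real.log_exp, neg_neg] at hlow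
  have hcc : c⁻¹ * (c * (|y| + 1)) = |y| + 1 := by field_simp
  rw [hcc] at hlow
  have := le_abs_self y
  linarith

lemma S_surj (hm : 1 ≤ m) (y : ℝ) : ∃ z ∈ Ioo (-1:ℝ) 1, S m z = y := by
  obtain ⟨b, hb, hSb⟩ := S_big hm |y|
  have hbI : b ∈ Ioo (-1:ℝ) 1 := ⟨by linarith [hb.1], hb.2⟩
  have hnbI : -b ∈ Ioo (-1:ℝ) 1 := ⟨by linarith [hb.2], by linarith [hb.1]⟩
  have hSnb : S m (-b) = - S m b := S_neg hm hbI
  have hsub : Icc (-b) b ⊆ Ioo (-1:ℝ) 1 := fun t ht =>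
    ⟨by linarith [ht.1, hb.2], by linarith [ht.2, hb.2]⟩
  have hcont : ContinuousOn (S m) (Icc (-b) b) := fun t ht =>
    ((hasDerivAt_S hm (hsub ht)).continuousAt).continuousWithinAt
  have hy : y ∈ Icc (S m (-b)) (S m b) := by
    constructor
    · rw [hSnb]; have := neg_abs_le y; linarith
    · have := le_abs_self y; linarith
  obtain ⟨z, hz, hSz⟩ := intermediate_value_Icc (by linarith [hb.1] : -b ≤ b) hcont hy
  exact ⟨z, hsub hz, hSz⟩

/-- `S` restricted to `Ioo (-1) 1` as a function to `ℝ`. -/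
noncomputable def Sr (m : ℕ) : Ioo (-1:ℝ) 1 → ℝ := fun z => S m z.1

lemma Sr_strictMono (hm : 1 ≤ m) : StrictMono (Sr m) := fun a b hab =>
  S_strictMonoOn hm a.2 b.2 hab

lemma Sr_surj (hm : 1 ≤ m) : Function.Surjective (Sr m) := by
  intro y
  obtain ⟨z, hz, hSz⟩ := S_surj hm y
  exact ⟨⟨z, hz⟩, hSz⟩

/-- the order isomorphism -/
noncomputable def E (m : ℕ) (hm : 1 ≤ m) : Ioo (-1:ℝ) 1 ≃o ℝ :=
  StrictMono.orderIsoOfSurjective (Sr m) (Sr_strictMono hm) (Sr_surj hm)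

/-- the solution `x`. -/
noncomputable def xf (m : ℕ) (hm : 1 ≤ m) : ℝ → ℝ := fun s => ((E m hm).symm s).1

lemma xf_mem (m : ℕ) (hm : 1 ≤ m) (s : ℝ) : xf m hm s ∈ Ioo (-1:ℝ) 1 := ((E m hm).symm s).2

lemma S_xf (m : ℕ) (hm : 1 ≤ m) (s : ℝ) : S m (xf m hm s) = s := by
  have h : S m (xf m hm s) = Sr m ((E m hm).symm s) := rfl
  rw [h]
  have h2 : Sr m ((E m hm).symm s) = E m hm ((E m hm).symm s) := by
    rw [E, StrictMono.coe_orderIsoOfSurjective]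
  rw [h2, (E m hm).apply_symm_apply]

lemma xf_cont (m : ℕ) (hm : 1 ≤ m) : Continuous (xf m hm) :=
  continuous_subtype_val.comp (E m hm).symm.continuous

lemma hasDerivAt_xf (m : ℕ) (hm : 1 ≤ m) (s : ℝ) :
    HasDerivAt (xf m hm) (g m (xf m hm s)) s := by
  have hx := xf_mem m hm s
  have h1 : HasDerivAt (S m) ((g m (xf m hm s))⁻¹) (xf m hm s) := hasDerivAt_S hm hx
  have h2 : ((g m (xf m hm s))⁻¹) ≠ 0 := inv_ne_zero (g_pos hm hx).ne'
  have := HasDerivAt.of_local_left_inverse ((xf_cont m hm).continuousAt) h1 h2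
    (Eventually.of_forall fun y => S_xf m hm y)
  rwa [inv_inv] at this

/-- the angle function -/
noncomputable def θf (m : ℕ) (hm : 1 ≤ m) : ℝ → ℝ :=
  fun s => Real.arcsin (oddGraphF m (xf m hm s))

lemma sin_θf (m : ℕ) (hm : 1 ≤ m) (s : ℝ) :
    Real.sin (θf m hm s) = oddGraphF m (xf m hm s) := by
  have h := abs_lt.1 (F_abs_lt hm (xf_mem m hm s))
  exact Real.sin_arcsin h.1.le h.2.le

lemma cos_θf (m : ℕ) (hm : 1 ≤ m) (s : ℝ) :
    Real.cos (θf m hm s) = g m (xf m hm s) := by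
  rw [θf, Real.cos_arcsin]; rfl

lemma θf_cont (m : ℕ) (hm : 1 ≤ m) : Continuous (θf m hm) :=
  Real.continuous_arcsin.comp ((F_cont m).comp (xf_cont m hm))

lemma hasDerivAt_θf (m : ℕ) (hm : 1 ≤ m) (s : ℝ) :
    HasDerivAt (θf m hm) (Fd m (xf m hm s)) s := by
  have hx := xf_mem m hm s
  have habs := abs_lt.1 (F_abs_lt hm hx)
  have hinner : HasDerivAt (fun s => oddGraphF m (xf m hm s))
      (Fd m (xf m hm s) * g m (xf m hm s)) s :=
    (hasDerivAt_F m (xf m hm s)).comp s (hasDerivAt_xf m hm s)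
  have houter := Real.hasDerivAt_arcsin habs.1.ne' habs.2.ne
  have h := houter.comp s hinner
  have hgpos := g_pos hm hx
  have hg : Real.sqrt (1 - oddGraphF m (xf m hm s) ^ 2) = g m (xf m hm s) := rfl
  refine h.congr_deriv ?_
  rw [hg]
  field_simp

/-- the height function -/
noncomputable def uf (m : ℕ) (hm : 1 ≤ m) : ℝ → ℝ :=
  fun s => ∫ t in (0:ℝ)..s, Real.sin (θf m hm t)

lemma hasDerivAt_uf (m : ℕ) (hm : 1 ≤ m) (s : ℝ) :
    HasDerivAt (uf m hm) (Real.sin (θf m hm s)) s := by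
  have hc : Continuous (fun t => Real.sin (θf m hm t)) :=
    Real.continuous_sin.comp (θf_cont m hm)
  apply intervalIntegral.integral_hasDerivAt_right (hc.intervalIntegrable _ _)
    (hc.measurable.stronglyMeasurable.stronglyMeasurableAtFilter) hc.continuousAt

lemma xf_tendsto_top (m : ℕ) (hm : 1 ≤ m) : Tendsto (xf m hm) atTop (nhds 1) := by
  rw [tendsto_order]
  constructor
  · intro a ha
    set z := (max a (-1) + 1) / 2 with hz
    have h1 : max a (-1) < 1 := max_lt ha (by norm_num)
    have hzI : z ∈ Ioo (-1:ℝ) 1 := ⟨by simp only [hz]; nlinarith [le_max_right a (-1)],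
      by simp only [hz]; linarith⟩
    have haz : a < z := lt_of_le_of_lt (le_max_left a (-1)) (by simp only [hz]; linarith)
    filter_upwards [eventually_ge_atTop (S m z)] with s hs
    by_contra h
    push_neg at h
    have hxz : xf m hm s < z := lt_of_le_of_lt h haz
    have := S_strictMonoOn hm (xf_mem m hm s) hzI hxz
    rw [S_xf] at this
    linarith
  · intro a ha
    filter_upwards with s
    exact lt_trans (xf_mem m hm s).2 ha

lemma xf_tendsto_bot (m : ℕ) (hm : 1 ≤ m) : Tendsto (xf m hm) atBot (nhds (-1)) := by
  rw [tendsto_order]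
  constructor
  · intro a ha
    filter_upwards with s
    exact lt_trans ha (xf_mem m hm s).1
  · intro a ha
    set z := (min a 1 + (-1)) / 2 with hz
    have h1 : -1 < min a 1 := lt_min ha (by norm_num)
    have hzI : z ∈ Ioo (-1:ℝ) 1 := ⟨by simp only [hz]; linarith,
      by simp only [hz]; nlinarith [min_le_right a 1]⟩
    have haz : z < a := lt_of_lt_of_le (by simp only [hz]; linarith) (min_le_left a 1)
    filter_upwards [eventually_le_atBot (S m z)] with s hs
    by_contra h
    push_neg at h
    have hxz : z < xf m hm s := lt_of_lt_of_le haz h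
    have := S_strictMonoOn hm hzI (xf_mem m hm s) hxz
    rw [S_xf] at this
    linarith

end Stmt17

open Stmt17

/-- for `m ≥ 1` and `F(y) = ((2m+1)y − y^{2m+1})/(2m)` one has `F(1) = 1`,
`F(−1) = −1`, `F'(±1) = 0`, `F' > 0` and `|F| < 1` on `(−1,1)`, and there is a global
solution of `x' = cos θ`, `u' = sin θ`, `θ' = F'(x)` with `sin θ = F(x)`, `cos θ > 0`,
`−1 < x < 1`, `x(s) → −1` as `s → −∞` and `x(s) → 1` as `s → +∞`; the plane curve
`(x,u)` is an infinite geodesic graph at the odd jet level `k = 2m+1 ≥ 3`. -/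
theorem stmt_17 (m : ℕ) (hm : 1 ≤ m) :
    oddGraphF m 1 = 1 ∧
    oddGraphF m (-1) = -1 ∧
    deriv (oddGraphF m) 1 = 0 ∧
    deriv (oddGraphF m) (-1) = 0 ∧
    (∀ y ∈ Set.Ioo (-1 : ℝ) 1, 0 < deriv (oddGraphF m) y ∧ |oddGraphF m y| < 1) ∧
    ∃ x u θ : ℝ → ℝ,
      (∀ s : ℝ, HasDerivAt x (Real.cos (θ s)) s ∧
        HasDerivAt u (Real.sin (θ s)) s ∧
        HasDerivAt θ (deriv (oddGraphF m) (x s)) s ∧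
        Real.sin (θ s) = oddGraphF m (x s) ∧
        0 < Real.cos (θ s) ∧ x s ∈ Set.Ioo (-1 : ℝ) 1) ∧
      Tendsto x atBot (nhds (-1)) ∧ Tendsto x atTop (nhds 1) := by
  refine ⟨F_one hm, F_negone hm, by rw [deriv_F, Fd_one], by rw [deriv_F, Fd_negone],
    fun y hy => ⟨by rw [deriv_F]; exact Fd_pos hm hy, F_abs_lt hm hy⟩,
    xf m hm, uf m hm, θf m hm, fun s => ?_, xf_tendsto_bot m hm, xf_tendsto_top m hm⟩
  refine ⟨?_, hasDerivAt_uf m hm s, ?_, sin_θf m hm s, ?_, xf_mem m hm s⟩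
  · rw [cos_θf]; exact hasDerivAt_xf m hm s
  · rw [deriv_F]; exact hasDerivAt_θf m hm s
  · rw [cos_θf]; exact g_pos hm (xf_mem m hm s)
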